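/- Let Z be a uniformly perfect compact metric space and G ↷ Z a uniformly quasi-Möbius action by homeomorphisms such that the induced action G ↷ Tri(Z) on the space of distinct triples is cocompact. Then for every nonempty open set U ⊆ Z there exists a sequence (g_k) in G such that diam(Z ∖ g_k(U)) → 0 as k → ∞. -/

import Mathlib

open Metric Set MeasureTheory Filter Topology

noncomputable section

/-- Cross-ratio of a four-tuple of points in a metric space. -/
def crossRatio {Z : Type*} [MetricSpace Z] (z₁ z₂ z₃ z₄ : Z) : NNReal :=
  nndist z₁ z₃ * nndist z₂ z₄ / (nndist z₁ z₄ * nndist z₂ z₃)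

/-- `f : X → Y` is `η`-quasi-Möbius. -/
def IsQuasiMobius {X Y : Type*} [MetricSpace X] [MetricSpace Y]
    (η : NNReal ≃ₜ NNReal) (f : X → Y) : Prop :=
  Function.Injective f ∧
  ∀ x₁ x₂ x₃ x₄ : X, x₁ ≠ x₂ → x₁ ≠ x₃ → x₁ ≠ x₄ → x₂ ≠ x₃ → x₂ ≠ x₄ → x₃ ≠ x₄ →
    crossRatio (f x₁) (f x₂) (f x₃) (f x₄) ≤ η (crossRatio x₁ x₂ x₃ x₄)

/-- `f : X → Y` is `η`-quasi-symmetric. -/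
def IsQuasiSymmetric {X Y : Type*} [MetricSpace X] [MetricSpace Y]
    (η : NNReal ≃ₜ NNReal) (f : X → Y) : Prop :=
  Function.Injective f ∧
  ∀ x₁ x₂ x₃ : X, x₁ ≠ x₂ → x₁ ≠ x₃ → x₂ ≠ x₃ →
    nndist (f x₁) (f x₂) / nndist (f x₁) (f x₃) ≤ η (nndist x₁ x₂ / nndist x₁ x₃)

/-- Lebesgue covering dimension is at most `n`. -/
def covDimLE (X : Type*) [TopologicalSpace X] (n : ℕ) : Prop :=
  ∀ 𝒰 : Set (Set X), (∀ U ∈ 𝒰, IsOpen U) → ⋃₀ 𝒰 = univ →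
    ∃ 𝒱 : Set (Set X), (∀ V ∈ 𝒱, IsOpen V) ∧ ⋃₀ 𝒱 = univ ∧
      (∀ V ∈ 𝒱, ∃ U ∈ 𝒰, V ⊆ U) ∧
      ∀ x : X, {V ∈ 𝒱 | x ∈ V}.encard ≤ (n + 1 : ℕ)

/-- Lebesgue covering (topological) dimension. -/
noncomputable def topDim (X : Type*) [TopologicalSpace X] : ℕ∞ :=
  ⨅ (n : ℕ) (_ : covDimLE X n), (n : ℕ∞)

/-- Ahlfors `Q`-regularity. -/
def AhlforsRegular (Q : ℝ) (Z : Type*) [MetricSpace Z] [MeasurableSpace Z] [BorelSpace Z] :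
    Prop :=
  0 < Q ∧ CompleteSpace Z ∧ 0 < Metric.diam (univ : Set Z) ∧
  ∃ C : ℝ, 1 ≤ C ∧ ∀ (z : Z) (R : ℝ), 0 < R → R ≤ Metric.diam (univ : Set Z) →
    ENNReal.ofReal (R ^ Q / C) ≤ μH[Q] (Metric.ball z R) ∧
    μH[Q] (Metric.ball z R) ≤ ENNReal.ofReal (C * R ^ Q)

/-- The action of `G` on `Z` is by homeomorphisms, each `η`-quasi-Möbius. -/
def QMAction (η : NNReal ≃ₜ NNReal) (G Z : Type*) [Group G] [MulAction G Z]
    [MetricSpace Z] : Prop :=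
  (∀ g : G, Continuous fun z : Z => g • z) ∧
  ∀ g : G, IsQuasiMobius η (fun z : Z => g • z)

/-- Cocompactness of the induced action on distinct triples (for compact `Z`). -/
def TriplesCocompact (G Z : Type*) [Group G] [MulAction G Z] [MetricSpace Z] : Prop :=
  ∃ δ > (0:ℝ), ∀ z₁ z₂ z₃ : Z, z₁ ≠ z₂ → z₁ ≠ z₃ → z₂ ≠ z₃ →
    ∃ g : G, δ ≤ dist (g • z₁) (g • z₂) ∧ δ ≤ dist (g • z₁) (g • z₃) ∧
      δ ≤ dist (g • z₂) (g • z₃)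

def IsStableValue {X Y : Type*} [TopologicalSpace X] [MetricSpace Y]
    (f : X → Y) (y : Y) : Prop :=
  ∃ ε > (0:ℝ), ∀ g : X → Y, Continuous g → (∀ x, dist (f x) (g x) < ε) → y ∈ range g

def IsStableValueOn {X Y : Type*} [TopologicalSpace X] [MetricSpace Y]
    (f : X → Y) (s : Set X) (y : Y) : Prop :=
  IsStableValue (fun x : s => f x) y

def IsStablePoint {X Y : Type*} [TopologicalSpace X] [MetricSpace Y]
    (f : X → Y) (x : X) : Prop :=
  ∀ U ∈ nhds x, IsStableValueOn f U (f x)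

/-- `f` is a regular map. -/
def IsRegularMap {X Y : Type*} [MetricSpace X] [MetricSpace Y] (f : X → Y) : Prop :=
  (∃ L : NNReal, LipschitzWith L f) ∧
  ∃ N : ℕ, ∀ (y : Y) (r : ℝ), 0 < r → ∃ t : Finset X, t.card ≤ N ∧
    f ⁻¹' Metric.ball y r ⊆ ⋃ c ∈ t, Metric.ball c r

/-- A metric space is doubling. -/
def MetricDoubling (Y : Type*) [MetricSpace Y] : Prop :=
  ∃ M : ℕ, ∀ (y : Y) (R : ℝ), ∃ t : Finset Y, t.card ≤ M ∧
    Metric.ball y R ⊆ ⋃ c ∈ t, Metric.ball c (R / 2)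

/-- A metric space is uniformly perfect. -/
def UniformlyPerfect (Z : Type*) [MetricSpace Z] : Prop :=
  ∃ lam : ℝ, 1 ≤ lam ∧ ∀ (z : Z) (R : ℝ), 0 < R → R ≤ Metric.diam (univ : Set Z) →
    (Metric.closedBall z R \ Metric.ball z (R / lam)).Nonempty

/-- `(S, q)` is a weak tangent of `Z`: `S` is complete and some rescalings
`(λ_k Z, p_k)` converge to `(S, q)` in the pointed Gromov–Hausdorff sense. -/
def PointedWeakTangent (Z : Type*) [MetricSpace Z] (S : Type*) [MetricSpace S]
    (q : S) : Prop :=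
  CompleteSpace S ∧
  ∃ (lam : ℕ → ℝ) (p : ℕ → Z), (∀ k, 0 < lam k) ∧ Tendsto lam atTop atTop ∧
    ∀ R > (0:ℝ), ∀ ε > (0:ℝ), ∃ (N : ℕ) (M : Set S),
      q ∈ M ∧ M ⊆ Metric.ball q R ∧ (∀ s ∈ Metric.ball q R, ∃ m ∈ M, dist s m ≤ ε) ∧
      ∀ k ≥ N, ∃ (Mk : Set Z) (F : Z → S),
        p k ∈ Mk ∧ (∀ z ∈ Mk, lam k * dist z (p k) < R) ∧
        (∀ z : Z, lam k * dist z (p k) < R → ∃ w ∈ Mk, lam k * dist z w ≤ ε) ∧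
        F (p k) = q ∧ Set.BijOn F Mk M ∧
        ∀ a ∈ Mk, ∀ b ∈ Mk, |lam k * dist a b - dist (F a) (F b)| < ε

lemma homeo_nnreal_strictMono (η : NNReal ≃ₜ NNReal) : StrictMono η := by
  rcases (η.continuous.strictMono_of_inj η.injective) with h | h
  · exact h
  · exfalso
    obtain ⟨x, hx⟩ := η.surjective (η 0 + 1)
    rcases eq_or_lt_of_le (zero_le : (0:NNReal) ≤ x) with h0 | h0
    · simp [← h0] at hx
    · have := h h0
      rw [hx] at this
      simp at this

lemma homeo_nnreal_map_zero (η : NNReal ≃ₜ NNReal) : η 0 = 0 := by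
  obtain ⟨x, hx⟩ := η.surjective 0
  rcases eq_or_lt_of_le (zero_le : (0:NNReal) ≤ x) with h0 | h0
  · rw [← h0] at hx; exact hx
  · exact absurd (hx ▸ (homeo_nnreal_strictMono η h0)) (by simp)

/-- **Bonk–Kleiner, Lemma 5.1 (ii).** For a uniformly quasi-Möbius action on a
uniformly perfect compact space which is cocompact on distinct triples, every
nonempty open set can be blown up so that the complement of its image has
arbitrarily small diameter. -/
theorem complement_of_blown_up_open_set_small {Z : Type*} [MetricSpace Z]
    [CompactSpace Z] (hup : UniformlyPerfect Z)
    {G : Type*} [Group G] [MulAction G Z] (η : NNReal ≃ₜ NNReal)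
    (hcont : ∀ g : G, Continuous fun z : Z => g • z)
    (hqm : ∀ g : G, IsQuasiMobius η (fun z : Z => g • z))
    (hcc : TriplesCocompact G Z)
    (U : Set Z) (hU : IsOpen U) (hne : U.Nonempty) :
    ∃ g : ℕ → G,
      Tendsto (fun k => Metric.diam (univ \ (fun z => g k • z) '' U)) atTop (nhds 0) := by
  classical
  obtain ⟨p, hp⟩ := hne
  have hbdd : Bornology.IsBounded (univ : Set Z) := isCompact_univ.isBounded
  rcases eq_or_lt_of_le (Metric.diam_nonneg (s := (univ : Set Z))) with hD0 | hD
  · -- degenerate: Z is a single point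
    refine ⟨fun _ => 1, ?_⟩
    have hsub : ∀ x y : Z, x = y := by
      intro x y
      have := Metric.dist_le_diam_of_mem hbdd (mem_univ x) (mem_univ y)
      rw [← hD0] at this
      exact dist_le_zero.mp this
    have hemp : ∀ k : ℕ, (univ \ (fun z => (1:G) • z) '' U) = (∅ : Set Z) := by
      intro k
      rw [diff_eq_empty]
      intro x _
      exact ⟨p, hp, by simp [hsub p x]⟩
    have heq : (fun k : ℕ => Metric.diam (univ \ (fun z => (1:G) • z) '' U)) = fun _ => (0:ℝ) := by
      funext k
      rw [hemp k, Metric.diam_empty]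
    rw [heq]
    exact tendsto_const_nhds
  · -- main case
    obtain ⟨lam, hlam1, hupf⟩ := hup
    obtain ⟨δ, hδ, hccf⟩ := hcc
    obtain ⟨r₀, hr₀, hball₀⟩ := Metric.isOpen_iff.mp hU p hp
    set D := Metric.diam (univ : Set Z) with hDdef
    set r := min r₀ D with hrdef
    have hr : 0 < r := lt_min hr₀ hD
    have hball : ball p r ⊆ U := (ball_subset_ball (min_le_left _ _)).trans hball₀
    have hrD : r ≤ D := min_le_right _ _
    have hlam0 : 0 < lam := lt_of_lt_of_le one_pos hlam1
    set ε : ℕ → ℝ := fun k => r / (2 * (k + 1)) with hεdef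
    have hε0 : ∀ k, 0 < ε k := fun k => div_pos hr (by positivity)
    have hεr : ∀ k, ε k ≤ r / 2 := by
      intro k
      apply div_le_div_of_nonneg_left hr.le (by norm_num)
      have : (1:ℝ) ≤ (k+1 : ℝ) := by exact_mod_cast Nat.one_le_iff_ne_zero.mpr (Nat.succ_ne_zero k)
      linarith
    have hεD : ∀ k, ε k ≤ D := fun k => (hεr k).trans (by linarith)
    set D' : NNReal := Real.toNNReal D with hD'def
    set R' : NNReal := Real.toNNReal r with hR'def
    set H' : NNReal := Real.toNNReal (r / 2) with hH'def
    set δ' : NNReal := Real.toNNReal δ with hδ'def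
    have hδ'0 : δ' ≠ 0 := by simp [hδ'def, Real.toNNReal_pos.mpr hδ, pos_iff_ne_zero.mp]
    have hR'0 : 0 < R' := Real.toNNReal_pos.mpr hr
    have hH'0 : 0 < H' := Real.toNNReal_pos.mpr (by linarith)
    set T : ℕ → NNReal := fun k => D' * Real.toNNReal (ε k) / (H' * R') with hTdef
    set B : ℕ → ℝ := fun k => ((η (T k) * (D' * D') / δ' : NNReal) : ℝ) with hBdef
    have hB0 : ∀ k, 0 ≤ B k := fun k => (η (T k) * (D' * D') / δ').coe_nonneg
    have key : ∀ k : ℕ, ∃ g : G,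
        ∀ u ∈ univ \ (fun z => g • z) '' U, ∀ v ∈ univ \ (fun z => g • z) '' U,
          dist u v ≤ B k := by
      intro k
      obtain ⟨z₂, hz₂⟩ := hupf p (ε k) (hε0 k) (hεD k)
      obtain ⟨z₃, hz₃⟩ := hupf p (ε k / (2 * lam)) (by positivity)
        (le_trans (by rw [div_le_iff₀ (by positivity)]; nlinarith [hε0 k]) (hεD k))
      have hz₂mem : dist z₂ p ≤ ε k := mem_closedBall.mp hz₂.1
      have hz₂low : ε k / lam ≤ dist z₂ p := not_lt.mp (fun h => hz₂.2 (mem_ball.mpr h))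
      have hz₃mem : dist z₃ p ≤ ε k / (2 * lam) := mem_closedBall.mp hz₃.1
      have hz₃low : ε k / (2 * lam) / lam ≤ dist z₃ p := not_lt.mp (fun h => hz₃.2 (mem_ball.mpr h))
      have hεlam : 0 < ε k / lam := div_pos (hε0 k) hlam0
      have hpz₂ : p ≠ z₂ := by
        intro h; rw [← h] at hz₂low; simp at hz₂low; linarith
      have hpz₃ : p ≠ z₃ := by
        intro h; rw [← h] at hz₃low; simp at hz₃low
        have hpos : 0 < ε k / (2 * lam) / lam := by positivity
        linarith
      have hz₂z₃ : z₂ ≠ z₃ := by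
        intro h
        rw [← h] at hz₃mem
        have : ε k / lam ≤ ε k / (2 * lam) := le_trans hz₂low hz₃mem
        rw [div_le_div_iff₀ hlam0 (by positivity)] at this
        nlinarith [hε0 k]
      obtain ⟨g, hg1, -, -⟩ := hccf p z₂ z₃ hpz₂ hpz₃ hz₂z₃
      refine ⟨g, ?_⟩
      intro u hu v hv
      rcases eq_or_ne u v with rfl | huv
      · simpa using hB0 k
      set u' := g⁻¹ • u with hu'def
      set v' := g⁻¹ • v with hv'def
      have hgu : g • u' = u := smul_inv_smul g u
      have hgv : g • v' = v := smul_inv_smul g v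
      have hu'U : u' ∉ U := fun h => hu.2 ⟨u', h, hgu⟩
      have hv'U : v' ∉ U := fun h => hv.2 ⟨v', h, hgv⟩
      have hu'p : r ≤ dist u' p := not_lt.mp (fun h => hu'U (hball (mem_ball.mpr h)))
      have hv'p : r ≤ dist v' p := not_lt.mp (fun h => hv'U (hball (mem_ball.mpr h)))
      have hu'z₂ : r / 2 ≤ dist u' z₂ := by
        have h1 := dist_triangle u' z₂ p
        have := hεr k
        linarith
      have hv'z₂ : r / 2 ≤ dist v' z₂ := by
        have h1 := dist_triangle v' z₂ p
        have := hεr k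
        linarith
      -- distinctness
      have hu'v' : u' ≠ v' := fun h => huv (by rw [← hgu, ← hgv, h])
      have hne_u'p : u' ≠ p := fun h => by rw [h] at hu'p; simp at hu'p; linarith
      have hne_u'z₂ : u' ≠ z₂ := fun h => by rw [h] at hu'z₂; simp at hu'z₂; linarith
      have hne_pv' : p ≠ v' := fun h => by rw [← h] at hv'p; simp at hv'p; linarith
      have hne_v'z₂ : v' ≠ z₂ := fun h => by rw [h] at hv'z₂; simp at hv'z₂; linarith
      have hQM := (hqm g).2 u' p v' z₂ hne_u'p hu'v' hne_u'z₂ hne_pv' hpz₂ hne_v'z₂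
      simp only [hu'def, hv'def, smul_inv_smul] at hQM
      rw [← hu'def, ← hv'def] at hQM
      -- domain cross-ratio bound
      have hd1 : nndist u' z₂ ≠ 0 := fun h => hne_u'z₂ (nndist_eq_zero.mp h)
      have hd2 : nndist p v' ≠ 0 := fun h => hne_pv' (nndist_eq_zero.mp h)
      have hcrdom : crossRatio u' p v' z₂ ≤ T k := by
        rw [crossRatio, div_le_iff₀ (pos_iff_ne_zero.mpr (mul_ne_zero hd1 hd2))]
        calc nndist u' v' * nndist p z₂
            ≤ D' * Real.toNNReal (ε k) := by
              apply mul_le_mul'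
              · exact Real.le_toNNReal_iff_coe_le Metric.diam_nonneg |>.mpr
                  (Metric.dist_le_diam_of_mem hbdd (mem_univ u') (mem_univ v'))
              · exact Real.le_toNNReal_iff_coe_le (hε0 k).le |>.mpr
                  (by rw [← dist_nndist, dist_comm]; exact hz₂mem)
          _ = T k * (H' * R') := by
              rw [hTdef, div_mul_cancel₀ _ (mul_pos hH'0 hR'0).ne']
          _ ≤ T k * (nndist u' z₂ * nndist p v') := by
              apply mul_le_mul' le_rfl
              apply mul_le_mul'
              · exact Real.toNNReal_le_iff_le_coe.mpr (by rw [← dist_nndist]; exact hu'z₂)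
              · exact Real.toNNReal_le_iff_le_coe.mpr
                  (by rw [← dist_nndist, dist_comm]; exact hv'p)
      have himg : crossRatio u (g • p) v (g • z₂) ≤ η (T k) :=
        hQM.trans ((homeo_nnreal_strictMono η).monotone hcrdom)
      -- image side
      have hz₂U : z₂ ∈ U := by
        apply hball
        rw [mem_ball]
        exact lt_of_le_of_lt hz₂mem (lt_of_le_of_lt (hεr k) (by linarith))
      have hugz₂ : u ≠ g • z₂ := by
        intro h
        exact hu.2 ⟨z₂, hz₂U, h.symm⟩
      have hgpv : g • p ≠ v := by
        intro h
        exact hv.2 ⟨p, hp, h⟩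
      have he1 : nndist u (g • z₂) ≠ 0 := fun h => hugz₂ (nndist_eq_zero.mp h)
      have he2 : nndist (g • p) v ≠ 0 := fun h => hgpv (nndist_eq_zero.mp h)
      rw [crossRatio, div_le_iff₀ (pos_iff_ne_zero.mpr (mul_ne_zero he1 he2))] at himg
      have hmain : nndist u v * δ' ≤ η (T k) * (D' * D') := by
        calc nndist u v * δ'
            ≤ nndist u v * nndist (g • p) (g • z₂) := by
              apply mul_le_mul' le_rfl
              exact Real.toNNReal_le_iff_le_coe.mpr (by rw [← dist_nndist]; exact hg1)
          _ ≤ η (T k) * (nndist u (g • z₂) * nndist (g • p) v) := himg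
          _ ≤ η (T k) * (D' * D') := by
              have hb1 : nndist u (g • z₂) ≤ D' :=
                Real.le_toNNReal_iff_coe_le Metric.diam_nonneg |>.mpr
                  (Metric.dist_le_diam_of_mem hbdd (mem_univ _) (mem_univ _))
              have hb2 : nndist (g • p) v ≤ D' :=
                Real.le_toNNReal_iff_coe_le Metric.diam_nonneg |>.mpr
                  (Metric.dist_le_diam_of_mem hbdd (mem_univ _) (mem_univ _))
              exact mul_le_mul' le_rfl (mul_le_mul' hb1 hb2)
      have hfinal : nndist u v ≤ η (T k) * (D' * D') / δ' :=
        (le_div_iff₀ (pos_iff_ne_zero.mpr hδ'0)).mpr hmain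
      rw [dist_nndist]
      exact_mod_cast hfinal
    choose g hg using key
    refine ⟨g, ?_⟩
    have hdiam : ∀ k, Metric.diam (univ \ (fun z => g k • z) '' U) ≤ B k := fun k =>
      Metric.diam_le_of_forall_dist_le (hB0 k) (hg k)
    have hT0 : Tendsto T atTop (𝓝 0) := by
      have hε : Tendsto ε atTop (𝓝 0) := by
        have h1 : Tendsto (fun k : ℕ => (1:ℝ) / (k + 1)) atTop (𝓝 0) :=
          tendsto_one_div_add_atTop_nhds_zero_nat
        have := h1.const_mul (r / 2)
        rw [mul_zero] at this
        refine this.congr (fun k => ?_)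
        rw [hεdef]
        field_simp
      have h2 : Tendsto (fun k => Real.toNNReal (ε k)) atTop (𝓝 0) := by
        have := (continuous_real_toNNReal.tendsto 0).comp hε
        simpa [Real.toNNReal_zero, Function.comp_def] using this
      have h3 := h2.const_mul D'
      rw [mul_zero] at h3
      have h4 := h3.mul_const (H' * R')⁻¹
      rw [zero_mul] at h4
      refine h4.congr (fun k => ?_)
      simp only [hTdef, div_eq_mul_inv]
    have hB : Tendsto B atTop (𝓝 0) := by
      have hη : Tendsto (fun k => η (T k)) atTop (𝓝 0) := by
        have := (η.continuous.tendsto 0).comp hT0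
        rwa [homeo_nnreal_map_zero] at this
      have h5 := (hη.mul_const (D' * D')).mul_const δ'⁻¹
      rw [zero_mul, zero_mul] at h5
      have h6 : Tendsto (fun k => (η (T k) * (D' * D') / δ' : NNReal)) atTop (𝓝 0) := by
        refine h5.congr (fun k => ?_)
        rw [div_eq_mul_inv]
      rw [hBdef]
      rw [show (0:ℝ) = ((0:NNReal):ℝ) from rfl]
      exact NNReal.tendsto_coe.mpr h6
    exact squeeze_zero (fun k => Metric.diam_nonneg) hdiam hB
end
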